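/- Let G be a finite group and let N be a subgroup of the center of G. If x is an element of G whose order is coprime to the order of N, then the conjugacy class size of x in G equals the conjugacy class size of the coset Nx in the quotient group G/N. -/

import Mathlib

lemma stmt_6_aux {G : Type*} [Group G] {x y : G} (h : IsConj x y) :
    orderOf y = orderOf x := by
  obtain ⟨c, rfl⟩ := isConj_iff.mp h
  exact orderOf_injective (MulAut.conj c).toMonoidHom (MulAut.conj c).injective x

/-- If `N` is a central subgroup of a finite group `G` and `x ∈ G` has order
coprime to `|N|`, then the conjugacy class size of `x` in `G` equals the
conjugacy class size of `Nx` in `G/N`. -/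
theorem stmt_6 (G : Type*) [Group G] [Finite G] (N : Subgroup G) [N.Normal]
    (hN : N ≤ Subgroup.center G) (x : G)
    (hx : Nat.Coprime (orderOf x) (Nat.card N)) :
    Nat.card {y : G | IsConj x y} =
      Nat.card {y : G ⧸ N | IsConj ((x : G ⧸ N)) y} := by
  apply Nat.card_eq_of_bijective
    (fun y => ⟨(y.1 : G ⧸ N), Set.mem_setOf_eq.mpr
      (show IsConj (x : G ⧸ N) (y.1 : G ⧸ N) from (QuotientGroup.mk' N).map_isConj y.2)⟩)
  constructor
  · rintro ⟨y₁, hy₁⟩ ⟨y₂, hy₂⟩ h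
    simp only [Subtype.mk.injEq] at h ⊢
    rw [QuotientGroup.eq] at h
    set z := y₁⁻¹ * y₂ with hz
    have hzc : z ∈ Subgroup.center G := hN h
    have hcomm : Commute y₁ z := Subgroup.mem_center_iff.mp hzc y₁
    have hzo : orderOf z ∣ Nat.card N := Subgroup.orderOf_dvd_natCard N h
    have ho₁ : orderOf y₁ = orderOf x := stmt_6_aux hy₁
    have ho₂ : orderOf y₂ = orderOf x := stmt_6_aux hy₂
    have hcop : Nat.Coprime (orderOf y₁) (orderOf z) := by
      rw [ho₁]; exact hx.coprime_dvd_right hzo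
    have h2 : orderOf (y₁ * z) = orderOf y₁ * orderOf z :=
      hcomm.orderOf_mul_eq_mul_orderOf_of_coprime hcop
    have hy : y₁ * z = y₂ := by rw [hz]; group
    rw [hy, ho₂, ho₁] at h2
    have hpos : 0 < orderOf x := orderOf_pos x
    have hz1 : orderOf z = 1 :=
      (Nat.eq_of_mul_eq_mul_left hpos (by rw [mul_one]; exact h2)).symm
    have hz1' : z = 1 := orderOf_eq_one_iff.mp hz1
    rw [← hy, hz1', mul_one]
  · rintro ⟨q, hq⟩
    obtain ⟨c, hc⟩ := isConj_iff.mp hq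
    obtain ⟨g, rfl⟩ := QuotientGroup.mk_surjective c
    refine ⟨⟨g * x * g⁻¹, isConj_iff.mpr ⟨g, rfl⟩⟩, ?_⟩
    simp only [Subtype.mk.injEq]
    rw [← hc]
    rfl
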